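/- (q-analogue of the Manvel–Meyerowitz–Schwenk–Smith–Stockmeyer identity.) Let k be an integer and u, x words over A with |u| ≥ k ≥ |x|. Then gauss(|u|−|x|, k−|x|)·binom_q(u,x) = Σ_{t ∈ A^k} binom_q(u,t)·binom_q(t,x), where the sum ranges over all words t of length k over A. -/

import Mathlib

noncomputable def qbinAux {A : Type*} [DecidableEq A] : List A → List A → Polynomial ℕ
  | _, [] => 1
  | [], _ :: _ => 0
  | a :: u, b :: v =>
      Polynomial.X ^ (v.length + 1) * qbinAux u (b :: v) +
        (if a = b then qbinAux u v else 0)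

/-- The `q`-binomial coefficient `binom_q(u,v)` of two words. -/
noncomputable def qbin {A : Type*} [DecidableEq A] (u v : List A) : Polynomial ℕ :=
  qbinAux u.reverse v.reverse

/-- The Gaussian binomial coefficient `gauss(m,n) ∈ ℕ[q]`, defined by the
`q`-Pascal recursion `gauss(m+1,n+1) = q^{n+1}·gauss(m,n+1) + gauss(m,n)`. -/
noncomputable def gauss : ℕ → ℕ → Polynomial ℕ
  | _, 0 => 1
  | 0, _ + 1 => 0
  | m + 1, n + 1 => Polynomial.X ^ (n + 1) * gauss m (n + 1) + gauss m n

section helper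
variable {A : Type*} [DecidableEq A] [Fintype A]

lemma qbinAux_nil : ∀ u : List A, qbinAux u ([] : List A) = 1
  | [] => rfl
  | _ :: _ => rfl

omit [Fintype A] in
lemma qbinAux_cons (a b : A) (u v : List A) :
    qbinAux (a :: u) (b :: v) = Polynomial.X ^ (v.length + 1) * qbinAux u (b :: v) +
      (if a = b then qbinAux u v else 0) := rfl

lemma gauss_zero (n : ℕ) : gauss n 0 = 1 := by cases n <;> rfl

lemma gauss_pascal (m n : ℕ) :
    gauss (m + 1) (n + 1) = Polynomial.X ^ (n + 1) * gauss m (n + 1) + gauss m n := rfl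

lemma qbinAux_zero : ∀ (u v : List A), u.length < v.length → qbinAux u v = 0
  | [], _ :: _, _ => rfl
  | a :: u, b :: v, h => by
    have h1 : u.length < (b :: v).length := by simp at h ⊢; omega
    have h2 : u.length < v.length := by simp at h; omega
    rw [qbinAux_cons, qbinAux_zero u (b :: v) h1, qbinAux_zero u v h2]
    simp

lemma sum_split (F : List A → Polynomial ℕ) (k : ℕ) :
    ∑ t : Fin (k + 1) → A, F (List.ofFn t)
      = ∑ b : A, ∑ t : Fin k → A, F (b :: List.ofFn t) := by
  rw [← (Fin.consEquiv fun _ : Fin (k + 1) => A).sum_comp (fun t => F (List.ofFn t)),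
    Fintype.sum_prod_type]
  refine Fintype.sum_congr _ _ fun b => Fintype.sum_congr _ _ fun t => ?_
  congr 1
  rw [List.ofFn_succ]
  simp [Fin.consEquiv]

lemma key (L k m : ℕ) (hm : m ≤ k + 1) (Q : Polynomial ℕ) (hQ : L < m → Q = 0) :
    gauss (L + 1 - m) (k + 1 - m) * (Polynomial.X ^ m * Q)
      = Polynomial.X ^ (k + 1) * (gauss (L - m) (k + 1 - m) * Q)
        + Polynomial.X ^ m * (if m ≤ k then gauss (L - m) (k - m) * Q else 0) := by
  by_cases hk : m ≤ k
  · rw [if_pos hk]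
    by_cases hL : m ≤ L
    · obtain ⟨n, rfl⟩ : ∃ n, L = m + n := ⟨L - m, by omega⟩
      obtain ⟨j, rfl⟩ : ∃ j, k = m + j := ⟨k - m, by omega⟩
      have e1 : m + n + 1 - m = n + 1 := by omega
      have e2 : m + j + 1 - m = j + 1 := by omega
      have e3 : m + n - m = n := by omega
      have e4 : m + j - m = j := by omega
      have e5 : m + j + 1 = m + (j + 1) := by omega
      rw [e1, e2, e3, e4, gauss_pascal, e5, pow_add]
      ring
    · rw [hQ (by omega)]
      ring
  · have : m = k + 1 := by omega
    subst this
    have e1 : k + 1 + 1 - (k + 1) = 1 := by omega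
    have e2 : k + 1 - (k + 1) = 0 := by omega
    rw [if_neg hk, e2]
    rcases Nat.lt_or_ge L (k + 1) with h | h
    · rw [hQ h]; ring
    · obtain ⟨n, rfl⟩ : ∃ n, L = k + 1 + n := ⟨L - (k + 1), by omega⟩
      have e3 : k + 1 + n + 1 - (k + 1) = n + 1 := by omega
      have e4 : k + 1 + n - (k + 1) = n := by omega
      rw [e3, e4, gauss_zero, gauss_zero]
      ring

lemma aux (u : List A) : ∀ (k : ℕ) (x : List A), x.length ≤ k →
    gauss (u.length - x.length) (k - x.length) * qbinAux u x
      = ∑ t : Fin k → A, qbinAux u (List.ofFn t) * qbinAux (List.ofFn t) x := by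
  induction u with
  | nil =>
    intro k x hx
    cases k with
    | zero =>
      have hx0 : x = [] := List.eq_nil_of_length_eq_zero (Nat.le_zero.mp hx)
      subst hx0
      simp [qbinAux_nil, gauss_zero]
    | succ k =>
      rw [Finset.sum_eq_zero fun t _ => by
        rw [qbinAux_zero ([] : List A) (List.ofFn t) (by simp), zero_mul]]
      cases x with
      | nil =>
        have : gauss (0 : ℕ) (k + 1) = 0 := rfl
        simp [qbinAux_nil, this]
      | cons c x' => rw [qbinAux_zero _ _ (by simp), mul_zero]
  | cons a u' ih =>
    intro k x hx
    cases k with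
    | zero =>
      have hx0 : x = [] := List.eq_nil_of_length_eq_zero (Nat.le_zero.mp hx)
      subst hx0
      simp [qbinAux_nil, gauss_zero]
    | succ k' =>
      rw [sum_split (fun w => qbinAux (a :: u') w * qbinAux w x) k']
      have step1 : ∀ b : A, ∀ t : Fin k' → A,
          qbinAux (a :: u') (b :: List.ofFn t) * qbinAux (b :: List.ofFn t) x
          = Polynomial.X ^ (k' + 1) *
              (qbinAux u' (b :: List.ofFn t) * qbinAux (b :: List.ofFn t) x)
            + (if a = b then qbinAux u' (List.ofFn t) * qbinAux (b :: List.ofFn t) x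
               else 0) := by
        intro b t
        rw [qbinAux_cons]
        simp only [List.length_ofFn]
        rw [add_mul, ite_mul, zero_mul, mul_assoc]
      simp only [step1]
      rw [Finset.sum_congr rfl (fun b _ => Finset.sum_add_distrib),
        Finset.sum_add_distrib]
      have col : ∀ b : A, ∑ t : Fin k' → A,
          (if a = b then qbinAux u' (List.ofFn t) * qbinAux (b :: List.ofFn t) x
           else 0)
          = if a = b then
              ∑ t : Fin k' → A, qbinAux u' (List.ofFn t) * qbinAux (a :: List.ofFn t) x
            else 0 := by
        intro b
        split_ifs with h
        · subst h; rfl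
        · simp
      rw [Finset.sum_congr rfl fun b _ => col b, Finset.sum_ite_eq]
      simp only [Finset.mem_univ, if_true]
      rw [Finset.sum_congr rfl fun b _ => (Finset.mul_sum _ _ _).symm, ← Finset.mul_sum,
        ← sum_split (fun w => qbinAux u' w * qbinAux w x) k', ← ih (k' + 1) x hx]
      cases x with
      | nil =>
        have e : ∀ t : Fin k' → A,
            qbinAux u' (List.ofFn t) * qbinAux (a :: List.ofFn t) ([] : List A)
            = qbinAux u' (List.ofFn t) * qbinAux (List.ofFn t) ([] : List A) := by
          intro t; rw [qbinAux_nil, qbinAux_nil]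
        rw [Finset.sum_congr rfl fun t _ => e t, ← ih k' [] (Nat.zero_le _)]
        simp only [List.length_nil, Nat.sub_zero, List.length_cons, qbinAux_nil, mul_one]
        rw [gauss_pascal]
      | cons c x' =>
        have hx' : x'.length ≤ k' := by simpa using hx
        have e : ∀ t : Fin k' → A,
            qbinAux u' (List.ofFn t) * qbinAux (a :: List.ofFn t) (c :: x')
            = Polynomial.X ^ (x'.length + 1) *
                (qbinAux u' (List.ofFn t) * qbinAux (List.ofFn t) (c :: x'))
              + (if a = c then qbinAux u' (List.ofFn t) * qbinAux (List.ofFn t) x'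
                 else 0) := by
          intro t
          rw [qbinAux_cons, mul_add, mul_ite, mul_zero, ← mul_assoc,
            mul_comm (qbinAux u' (List.ofFn t)) (Polynomial.X ^ (x'.length + 1)),
            mul_assoc]
        rw [Finset.sum_congr rfl fun t _ => e t, Finset.sum_add_distrib, ← Finset.mul_sum]
        have hmid : ∑ t : Fin k' → A,
            qbinAux u' (List.ofFn t) * qbinAux (List.ofFn t) (c :: x')
            = if x'.length + 1 ≤ k' then
                gauss (u'.length - (x'.length + 1)) (k' - (x'.length + 1)) *
                  qbinAux u' (c :: x')
              else 0 := by
          split_ifs with h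
          · rw [← ih k' (c :: x') (by simpa using h)]
            simp
          · exact Finset.sum_eq_zero fun t _ => by
              rw [qbinAux_zero (List.ofFn t) (c :: x') (by simp; omega), mul_zero]
        have hite : ∑ t : Fin k' → A,
            (if a = c then qbinAux u' (List.ofFn t) * qbinAux (List.ofFn t) x' else 0)
            = if a = c then
                gauss (u'.length - x'.length) (k' - x'.length) * qbinAux u' x'
              else 0 := by
          split_ifs with h
          · rw [← ih k' x' hx']
          · simp
        rw [hmid, hite, qbinAux_cons]
        have hQ : u'.length < x'.length + 1 → qbinAux u' (c :: x') = 0 := fun h =>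
          qbinAux_zero _ _ (by simpa using h)
        have hkey := key u'.length k' (x'.length + 1) (by omega) (qbinAux u' (c :: x')) hQ
        simp only [List.length_cons]
        rw [mul_add, hkey, mul_ite, mul_zero]
        have e1 : u'.length + 1 - (x'.length + 1) = u'.length - x'.length := by omega
        have e2 : k' + 1 - (x'.length + 1) = k' - x'.length := by omega
        rw [e1, e2]
        split_ifs <;> ring

omit [Fintype A] in
lemma ofFn_rev {n : ℕ} (f : Fin n → A) :
    (List.ofFn fun i => f i.rev).reverse = List.ofFn f := by
  apply List.ext_getElem (by simp)
  intro i h1 h2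
  simp only [List.getElem_reverse, List.getElem_ofFn, List.length_reverse,
    List.length_ofFn]
  congr 1
  simp only [Fin.rev]
  apply Fin.ext
  simp at h1 h2 ⊢
  omega

end helper



/-- The `q`-analogue of the Manvel–Meyerowitz–Schwenk–Smith–Stockmeyer identity:
for `|u| ≥ k ≥ |x|`,
`gauss(|u|-|x|, k-|x|)·binom_q(u,x) = Σ_{t ∈ A^k} binom_q(u,t)·binom_q(t,x)`.
Words of length `k` are parametrized by functions `Fin k → A`. -/
theorem qbin_mmsss (A : Type*) [Fintype A] [DecidableEq A]
    (k : ℕ) (u x : List A) (h1 : x.length ≤ k) (h2 : k ≤ u.length) :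
    gauss (u.length - x.length) (k - x.length) * qbin u x =
      ∑ t : Fin k → A, qbin u (List.ofFn t) * qbin (List.ofFn t) x := by
  have h := aux u.reverse k x.reverse (by simpa using h1)
  simp only [List.length_reverse] at h
  rw [qbin, h]
  have hbij : Function.Bijective (fun (t : Fin k → A) (i : Fin k) => t i.rev) := by
    have : Function.Involutive (fun (t : Fin k → A) (i : Fin k) => t i.rev) := by
      intro t; funext i; simp
    exact this.bijective
  refine Fintype.sum_bijective (fun (t : Fin k → A) (i : Fin k) => t i.rev) hbij _ _
    fun t => ?_
  show qbinAux u.reverse (List.ofFn t) * qbinAux (List.ofFn t) x.reverse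
      = qbin u (List.ofFn fun i => t i.rev) * qbin (List.ofFn fun i => t i.rev) x
  rw [qbin, qbin, ofFn_rev]
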